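/- Let Q be a finite unit interval order with a fixed open unit interval representation, and let A_1, A_2, ..., A_t be the partition of Q into antichains obtained by successively removing the set of minimal elements. Then for any a ∈ A_i and b ∈ A_{i+2}, we have a < b in Q. -/
import Mathlib


/-- What remains of the subset `Q` of a poset after `n` rounds of removing the
minimal elements. -/
def rest {α : Type*} [PartialOrder α] (Q : Set α) : ℕ → Set α
  | 0 => Q
  | n + 1 => {x ∈ rest Q n | ∃ y ∈ rest Q n, y < x}

/-- The `n`-th antichain in the partition of `Q` obtained by successively removing
minimal elements: the minimal elements of what remains after `n` rounds. -/
def layer {α : Type*} [PartialOrder α] (Q : Set α) (n : ℕ) : Set α :=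
  {x ∈ rest Q n | ∀ y ∈ rest Q n, ¬ y < x}

/-- For a finite unit interval order with an open unit interval representation,
any element of a layer is below every element two layers later. -/
theorem stmt_10 {α : Type*} [Fintype α] [PartialOrder α]
    (h : ∃ l : α → ℝ, ∀ x y : α, x < y ↔ l x + 1 ≤ l y)
    (i : ℕ) (a b : α) (ha : a ∈ layer (Set.univ : Set α) i)
    (hb : b ∈ layer (Set.univ : Set α) (i + 2)) :
    a < b := by
  obtain ⟨l, hl⟩ := h
  obtain ⟨hb2, -⟩ := hb
  obtain ⟨hy1, y, hy, hyb⟩ := hb2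
  obtain ⟨-, z, hz, hzy⟩ := hy
  obtain ⟨ha1, hamin⟩ := ha
  have hza : ¬ z < a := hamin z hz
  rw [hl] at hza hzy hyb ⊢
  linarith
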